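/- Let $G$ be a metabelian group (i.e., $G'' = 1$). Then for any $x, y \in G$ and any integer $\ell \geq 2$, $(xy^{-1})^\ell = x^\ell \left(\prod_{i+j \leq \ell} [ix, jy]^{\binom{\ell}{i+j}}\right) y^{-\ell}$, where $[ix, jy]$ denotes the iterated commutator $[x, y, x, \ldots, x, y, \ldots, y]$ with $i-1$ further occurrences of $x$ and $j-1$ further of $y$, and the product is over pairs $i, j \geq 1$ with $2 \leq i + j \leq \ell$. -/

import Mathlib

/-- The iterated left-normed commutator `[ix, jy] = [x, y, x, …, x, y, …, y]`
(with `i - 1` further occurrences of `x` and `j - 1` further occurrences of `y`),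
where `[u, v] = u⁻¹ v⁻¹ u v`. -/
def iterComm {G : Type*} [Group G] (x y : G) (i j : ℕ) : G :=
  (fun c => c⁻¹ * y⁻¹ * c * y)^[j - 1]
    ((fun c => c⁻¹ * x⁻¹ * c * x)^[i - 1] (x⁻¹ * y⁻¹ * x * y))

namespace XuAux

open scoped IsMulCommutative commutatorElement

variable {G : Type*} [Group G]

theorem conj_mem' (g : G) {c : G} (hc : c ∈ commutator G) :
    g⁻¹ * c * g ∈ commutator G := by
  have := (inferInstance : (commutator G).Normal).conj_mem c hc g⁻¹
  simpa using this

/-- conjugation `c ↦ g⁻¹ c g` as a monoid hom on the commutator subgroup -/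
def sigma (g : G) : commutator G →* commutator G where
  toFun c := ⟨g⁻¹ * c * g, conj_mem' g c.2⟩
  map_one' := by ext; simp
  map_mul' c d := by ext; push_cast; group

@[simp] lemma coe_sigma (g : G) (c : commutator G) :
    (sigma g c : G) = g⁻¹ * c * g := rfl

section comm
variable [hm : IsMulCommutative (commutator G)]

/-- `c ↦ [c, g] = c⁻¹ g⁻¹ c g` as a monoid hom -/
def Fh (g : G) : commutator G →* commutator G :=
  sigma g / MonoidHom.id _

lemma Fh_apply (g : G) (c : commutator G) : Fh g c = c⁻¹ * sigma g c := by
  show sigma g c / c = _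
  rw [div_eq_mul_inv, mul_comm]

lemma sigma_eq_mul_Fh (g : G) (c : commutator G) : sigma g c = c * Fh g c := by
  rw [Fh_apply, mul_inv_cancel_left]

lemma coe_Fh (g : G) (c : commutator G) :
    (Fh g c : G) = (c : G)⁻¹ * g⁻¹ * c * g := by
  rw [Fh_apply]
  push_cast
  simp [mul_assoc]

lemma coe_Fh_iter (g : G) (n : ℕ) (c : commutator G) :
    ((Fh g)^[n] c : G) = (fun a => a⁻¹ * g⁻¹ * a * g)^[n] (c : G) := by
  induction n with
  | zero => rfl
  | succ n ih =>
    rw [Function.iterate_succ_apply', Function.iterate_succ_apply', coe_Fh, ih]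

end comm

/-- `[x^n, y]` as an element of the commutator subgroup -/
def uu (x y : G) (n : ℕ) : commutator G :=
  ⟨(x ^ n)⁻¹ * y⁻¹ * x ^ n * y, by
    have h : ⁅(x ^ n)⁻¹, y⁻¹⁆ ∈ commutator G := by
      rw [commutator_def]
      exact Subgroup.commutator_mem_commutator (Subgroup.mem_top _) (Subgroup.mem_top _)
    simpa [commutatorElement_def, mul_assoc] using h⟩

@[simp] lemma coe_uu (x y : G) (n : ℕ) :
    (uu x y n : G) = (x ^ n)⁻¹ * y⁻¹ * x ^ n * y := rfl

section comm2
variable [hm : IsMulCommutative (commutator G)]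

/-- the iterated commutator `[ix, jy]` as an element of the commutator subgroup -/
def CC (x y : G) (i j : ℕ) : commutator G :=
  (Fh y)^[j - 1] ((Fh x)^[i - 1] (uu x y 1))

lemma coe_CC (x y : G) (i j : ℕ) : (CC x y i j : G) = iterComm x y i j := by
  rw [CC, iterComm, coe_Fh_iter, coe_Fh_iter]
  norm_num

lemma pascal_prod {M : Type*} [CommMonoid M] (X : ℕ → M) (n : ℕ) :
    ∏ k ∈ Finset.range (n + 2), X k ^ (n + 1).choose k =
      (∏ k ∈ Finset.range (n + 1), X k ^ n.choose k) *
        ∏ k ∈ Finset.range (n + 1), X (k + 1) ^ n.choose k := by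
  rw [Finset.prod_range_succ' (fun k => X k ^ (n + 1).choose k)]
  simp_rw [Nat.choose_succ_succ, pow_add, Finset.prod_mul_distrib]
  rw [Finset.prod_range_succ' (fun k => X k ^ n.choose k)]
  have h0 : (∏ k ∈ Finset.range (n + 1), X (k + 1) ^ n.choose (k + 1)) =
      ∏ k ∈ Finset.range n, X (k + 1) ^ n.choose (k + 1) := by
    rw [Finset.prod_range_succ, Nat.choose_succ_self, pow_zero, mul_one]
  rw [h0, Nat.choose_zero_right]
  simp [mul_comm, mul_assoc, mul_left_comm]

lemma sigma_iter_eq_prod (g : G) (n : ℕ) (c : commutator G) :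
    (sigma g)^[n] c =
      ∏ k ∈ Finset.range (n + 1), ((Fh g)^[k] c) ^ n.choose k := by
  induction n generalizing c with
  | zero => simp
  | succ n ih =>
    rw [Function.iterate_succ_apply, sigma_eq_mul_Fh,
      iterate_map_mul (sigma g), ih, ih]
    rw [pascal_prod (fun k => (Fh g)^[k] c) n]
    congr 1

lemma coe_sigma_iter (g : G) (n : ℕ) (c : commutator G) :
    ((sigma g)^[n] c : G) = (g ^ n)⁻¹ * c * g ^ n := by
  induction n with
  | zero => simp
  | succ n ih =>
    rw [Function.iterate_succ_apply', coe_sigma, ih]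
    group

lemma uu_succ (x y : G) (n : ℕ) :
    uu x y (n + 1) = (sigma x)^[n] (uu x y 1) * uu x y n := by
  ext
  push_cast [coe_sigma_iter, coe_uu]
  group

lemma uu_eq_prod (x y : G) (n : ℕ) :
    uu x y n = ∏ k ∈ Finset.range n, CC x y (k + 1) 1 ^ n.choose (k + 1) := by
  induction n with
  | zero =>
    ext; simp [coe_uu]
  | succ n ih =>
    have hCC : ∀ k, CC x y (k + 1) 1 = (Fh x)^[k] (uu x y 1) := fun k => rfl
    rw [uu_succ, sigma_iter_eq_prod, ih]
    have hext : (∏ k ∈ Finset.range n, CC x y (k + 1) 1 ^ n.choose (k + 1)) =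
        ∏ k ∈ Finset.range (n + 1), CC x y (k + 1) 1 ^ n.choose (k + 1) := by
      rw [Finset.prod_range_succ, Nat.choose_succ_self, pow_zero, mul_one]
    rw [hext, ← Finset.prod_mul_distrib]
    refine Finset.prod_congr rfl fun k _ => ?_
    rw [hCC, ← pow_add, ← Nat.choose_succ_succ]

def SS (n : ℕ) : Finset (ℕ × ℕ) :=
  (Finset.Icc 1 n ×ˢ Finset.Icc 1 n).filter fun p => p.1 + p.2 ≤ n

lemma mem_SS {n : ℕ} {p : ℕ × ℕ} :
    p ∈ SS n ↔ 1 ≤ p.1 ∧ 1 ≤ p.2 ∧ p.1 + p.2 ≤ n := by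
  simp only [SS, Finset.mem_filter, Finset.mem_product, Finset.mem_Icc]
  omega

def PP (x y : G) (n : ℕ) : commutator G :=
  ∏ p ∈ SS n, CC x y p.1 p.2 ^ n.choose (p.1 + p.2)

lemma sigma_CC (x y : G) (i m : ℕ) :
    sigma y (CC x y i (m + 1)) = CC x y i (m + 1) * CC x y i (m + 2) := by
  have h2 : CC x y i (m + 2) = Fh y (CC x y i (m + 1)) := by
    show (Fh y)^[m + 1] _ = Fh y ((Fh y)^[m] _)
    rw [Function.iterate_succ_apply']
  rw [h2, sigma_eq_mul_Fh]

lemma PP_succ (x y : G) (n : ℕ) :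
    PP x y (n + 1) = uu x y n * sigma y (PP x y n) := by
  have hσ : sigma y (PP x y n) =
      (∏ p ∈ SS n, CC x y p.1 p.2 ^ n.choose (p.1 + p.2)) *
        ∏ p ∈ SS n, CC x y p.1 (p.2 + 1) ^ n.choose (p.1 + p.2) := by
    rw [PP, map_prod, ← Finset.prod_mul_distrib]
    refine Finset.prod_congr rfl fun p hp => ?_
    obtain ⟨m, hm⟩ : ∃ m, p.2 = m + 1 :=
      ⟨p.2 - 1, by have := (mem_SS.mp hp).2.1; omega⟩
    rw [map_pow, hm, sigma_CC, mul_pow]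
  have hsub : SS n ⊆ SS (n + 1) := fun p hp => by
    rw [mem_SS] at hp ⊢; omega
  have hA : (∏ p ∈ SS n, CC x y p.1 p.2 ^ n.choose (p.1 + p.2)) =
      ∏ p ∈ SS (n + 1), CC x y p.1 p.2 ^ n.choose (p.1 + p.2) := by
    refine Finset.prod_subset hsub fun p hp hnp => ?_
    rw [mem_SS] at hp hnp
    rw [Nat.choose_eq_zero_of_lt (by omega), pow_zero]
  have hB1 : uu x y n =
      ∏ p ∈ (SS (n + 1)).filter (fun p => p.2 = 1),
        CC x y p.1 p.2 ^ n.choose (p.1 + p.2 - 1) := by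
    rw [uu_eq_prod]
    refine Finset.prod_nbij' (fun k => (k + 1, 1)) (fun p => p.1 - 1)
      (fun k hk => ?_) (fun p hp => ?_) (fun k hk => by simp)
      (fun p hp => ?_) (fun k hk => by norm_num)
    · simp only [Finset.mem_range] at hk
      simp [Finset.mem_filter, mem_SS]
      omega
    · simp only [Finset.mem_filter, mem_SS] at hp
      simp only [Finset.mem_range]
      omega
    · simp only [Finset.mem_filter, mem_SS] at hp
      obtain ⟨⟨h1, _, _⟩, h4⟩ := hp
      ext
      · simp; omega
      · simp [h4]
  have hB2 : (∏ p ∈ SS n, CC x y p.1 (p.2 + 1) ^ n.choose (p.1 + p.2)) =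
      ∏ p ∈ (SS (n + 1)).filter (fun p => ¬ p.2 = 1),
        CC x y p.1 p.2 ^ n.choose (p.1 + p.2 - 1) := by
    refine Finset.prod_nbij' (fun p => (p.1, p.2 + 1)) (fun p => (p.1, p.2 - 1))
      (fun p hp => ?_) (fun p hp => ?_) (fun p hp => by simp)
      (fun p hp => ?_) (fun p hp => by simp)
    · simp only [mem_SS] at hp
      simp [Finset.mem_filter, mem_SS]
      omega
    · simp only [Finset.mem_filter, mem_SS] at hp
      simp only [mem_SS]
      omega
    · simp only [Finset.mem_filter, mem_SS] at hp
      ext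
      · simp
      · simp; omega
  rw [hσ, hA, hB1, hB2, PP]
  rw [show ∀ a b c : commutator G, a * (b * c) = (a * c) * b by
    intro a b c; rw [mul_comm b c, mul_assoc]]
  rw [Finset.prod_filter_mul_prod_filter_not (SS (n + 1)) (fun p => p.2 = 1)]
  rw [← Finset.prod_mul_distrib]
  refine Finset.prod_congr rfl fun p hp => ?_
  rw [← pow_add]
  congr 1
  have h1 := (mem_SS.mp hp).1
  have h2 := (mem_SS.mp hp).2.1
  obtain ⟨m, hm⟩ : ∃ m, p.1 + p.2 = m + 1 := ⟨p.1 + p.2 - 1, by omega⟩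
  rw [hm, Nat.choose_succ_succ]
  simp [Nat.add_comm]

lemma main_formula (x y : G) (n : ℕ) :
    (x * y⁻¹) ^ n = x ^ n * (PP x y n : G) * (y ^ n)⁻¹ := by
  induction n with
  | zero => simp [PP, SS]
  | succ n ih =>
    have hP : (PP x y (n + 1) : G) =
        (x ^ n)⁻¹ * y⁻¹ * x ^ n * y * (y⁻¹ * (PP x y n : G) * y) := by
      rw [PP_succ]
      push_cast [coe_uu, coe_sigma]
      simp [mul_assoc]
    rw [pow_succ' (x * y⁻¹), ih, hP]
    group

end comm2

end XuAux


/-- (Xu) In a metabelian group `G`, for any `x, y ∈ G` and `ℓ ≥ 2`: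
`(x y⁻¹)^ℓ = x^ℓ (∏_{i+j ≤ ℓ} [ix, jy]^(C(ℓ, i+j))) y^(-ℓ)`, the product being over
pairs `i, j ≥ 1` with `i + j ≤ ℓ` (the factors all lie in the abelian group `G'`,
so the order of multiplication is irrelevant). -/
theorem stmt_19 (G : Type*) [Group G] (hmeta : IsMulCommutative (commutator G))
    (x y : G) (ℓ : ℕ) (hℓ : 2 ≤ ℓ) :
    (x * y⁻¹) ^ ℓ =
      x ^ ℓ *
        (((Finset.Icc 1 ℓ ×ˢ Finset.Icc 1 ℓ).filter
              (fun p => p.1 + p.2 ≤ ℓ)).toList.map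
            (fun p => iterComm x y p.1 p.2 ^ ℓ.choose (p.1 + p.2))).prod *
        (y ^ ℓ)⁻¹ := by
  haveI := hmeta
  have hfun : (fun p : ℕ × ℕ => iterComm x y p.1 p.2 ^ ℓ.choose (p.1 + p.2)) =
      ⇑(commutator G).subtype ∘
        (fun p : ℕ × ℕ => XuAux.CC x y p.1 p.2 ^ ℓ.choose (p.1 + p.2)) := by
    funext p
    simp [map_pow, XuAux.coe_CC]
  have hlist : (((Finset.Icc 1 ℓ ×ˢ Finset.Icc 1 ℓ).filter
        (fun p => p.1 + p.2 ≤ ℓ)).toList.map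
      (fun p => iterComm x y p.1 p.2 ^ ℓ.choose (p.1 + p.2))).prod
      = (XuAux.PP x y ℓ : G) := by
    rw [hfun, ← List.map_map, ← map_list_prod ((commutator G).subtype)]
    exact congrArg _ (open scoped IsMulCommutative in Finset.prod_map_toList _ _)
  rw [hlist]
  exact XuAux.main_formula x y ℓ
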